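/- If σ₀ : B × A → k is a skew pairing of Hopf algebras A and B, then the map γ₀ on the tensor product Hopf algebra A ⊗ B defined by γ₀(a ⊗ b, c ⊗ d) = ε(a)·σ₀(c, b)·ε(d) is a Hopf 2-cocycle on A ⊗ B. -/

import Mathlib

open TensorProduct Coalgebra

noncomputable section

/-- Convolution product of two `k`-valued linear functionals on a coalgebra:
`(f * g)(x) = Σ f(x₍₁₎) g(x₍₂₎)`. -/
def conv {k C : Type} [Field k] [AddCommGroup C] [Module k C] [Coalgebra k C]
    (f g : C →ₗ[k] k) : C →ₗ[k] k :=
  (TensorProduct.lid k k).toLinearMap ∘ₗ TensorProduct.map f g ∘ₗ Coalgebra.comul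

variable {k H : Type} [Field k] [Ring H] [Bialgebra k H]

/-- The linear map `x ⊗ y ⊗ z ↦ σ(x ⊗ y)·ε(z)`. -/
def sigmaEps (σ : H ⊗[k] H →ₗ[k] k) : H ⊗[k] (H ⊗[k] H) →ₗ[k] k :=
  (TensorProduct.lid k k).toLinearMap ∘ₗ TensorProduct.map σ Coalgebra.counit
    ∘ₗ (TensorProduct.assoc k H H H).symm.toLinearMap

/-- The linear map `x ⊗ y ⊗ z ↦ σ((x·y) ⊗ z)`. -/
def sigmaMul (σ : H ⊗[k] H →ₗ[k] k) : H ⊗[k] (H ⊗[k] H) →ₗ[k] k :=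
  σ ∘ₗ TensorProduct.map (LinearMap.mul' k H) LinearMap.id
    ∘ₗ (TensorProduct.assoc k H H H).symm.toLinearMap

/-- The linear map `x ⊗ y ⊗ z ↦ ε(x)·σ(y ⊗ z)`. -/
def epsSigma (σ : H ⊗[k] H →ₗ[k] k) : H ⊗[k] (H ⊗[k] H) →ₗ[k] k :=
  (TensorProduct.lid k k).toLinearMap ∘ₗ TensorProduct.map Coalgebra.counit σ

/-- The linear map `x ⊗ y ⊗ z ↦ σ(x ⊗ (y·z))`. -/
def mulSigma (σ : H ⊗[k] H →ₗ[k] k) : H ⊗[k] (H ⊗[k] H) →ₗ[k] k :=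
  σ ∘ₗ TensorProduct.map LinearMap.id (LinearMap.mul' k H)

/-- A Hopf 2-cocycle on `H`: convolution-invertible, normalized, satisfying
`Σ σ(x₍₁₎, y₍₁₎) σ(x₍₂₎y₍₂₎, z) = Σ σ(y₍₁₎, z₍₁₎) σ(x, y₍₂₎z₍₂₎)`. -/
def IsHopfTwoCocycle (σ : H ⊗[k] H →ₗ[k] k) : Prop :=
  (∃ τ : H ⊗[k] H →ₗ[k] k, conv σ τ = Coalgebra.counit ∧ conv τ σ = Coalgebra.counit) ∧
  σ (1 ⊗ₜ[k] 1) = 1 ∧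
  conv (sigmaEps σ) (sigmaMul σ) = conv (epsSigma σ) (mulSigma σ)

/-- A skew pairing of Hopf algebras `A`, `B` (first argument from `A`, second
from `B`): convolution invertible, with
`σ₀(cc', b) = Σ σ₀(c, b₍₁₎)σ₀(c', b₍₂₎)`, `σ₀(c, bb') = Σ σ₀(c₍₁₎, b')σ₀(c₍₂₎, b)`,
`σ₀(1, b) = ε(b)`, `σ₀(c, 1) = ε(c)`. -/
def IsSkewPairing {k A B : Type} [Field k] [Ring A] [HopfAlgebra k A]
    [Ring B] [HopfAlgebra k B] (σ₀ : A ⊗[k] B →ₗ[k] k) : Prop :=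
  (∃ τ : A ⊗[k] B →ₗ[k] k, conv σ₀ τ = Coalgebra.counit ∧ conv τ σ₀ = Coalgebra.counit) ∧
  (σ₀ ∘ₗ TensorProduct.map (LinearMap.mul' k A) (LinearMap.id : B →ₗ[k] B) =
    (TensorProduct.lid k k).toLinearMap ∘ₗ TensorProduct.map σ₀ σ₀
      ∘ₗ (TensorProduct.tensorTensorTensorComm k A A B B).toLinearMap
      ∘ₗ TensorProduct.map (LinearMap.id : A ⊗[k] A →ₗ[k] A ⊗[k] A) Coalgebra.comul) ∧
  (σ₀ ∘ₗ TensorProduct.map (LinearMap.id : A →ₗ[k] A) (LinearMap.mul' k B) =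
    (TensorProduct.lid k k).toLinearMap ∘ₗ TensorProduct.map σ₀ σ₀
      ∘ₗ (TensorProduct.tensorTensorTensorComm k A A B B).toLinearMap
      ∘ₗ TensorProduct.map Coalgebra.comul (TensorProduct.comm k B B).toLinearMap) ∧
  (∀ b : B, σ₀ ((1 : A) ⊗ₜ[k] b) = Coalgebra.counit b) ∧
  (∀ a : A, σ₀ (a ⊗ₜ[k] (1 : B)) = Coalgebra.counit a)

section collapse
variable {A : Type} [AddCommGroup A] [Module k A] [Coalgebra k A]

lemma collapse_left {a : A} {ι : Type*} (r : Coalgebra.Repr k a ι) (g : A →ₗ[k] k) :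
    ∑ i ∈ r.index, Coalgebra.counit (R := k) (r.left i) * g (r.right i) = g a := by
  have h : (∑ i ∈ r.index, Coalgebra.counit (R := k) (r.left i) • r.right i) = a := by
    have := congrArg (TensorProduct.lid k A) (Coalgebra.sum_counit_tmul_eq r)
    simpa only [map_sum, TensorProduct.lid_tmul, one_smul] using this
  calc ∑ i ∈ r.index, Coalgebra.counit (R := k) (r.left i) * g (r.right i)
      = g (∑ i ∈ r.index, Coalgebra.counit (R := k) (r.left i) • r.right i) := by
        rw [map_sum]; exact Finset.sum_congr rfl fun i _ => by rw [map_smul, smul_eq_mul]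
    _ = g a := by rw [h]

lemma collapse_right {a : A} {ι : Type*} (r : Coalgebra.Repr k a ι) (g : A →ₗ[k] k) :
    ∑ i ∈ r.index, g (r.left i) * Coalgebra.counit (R := k) (r.right i) = g a := by
  have h : (∑ i ∈ r.index, Coalgebra.counit (R := k) (r.right i) • r.left i) = a := by
    have := congrArg (TensorProduct.rid k A) (Coalgebra.sum_tmul_counit_eq r)
    simpa only [map_sum, TensorProduct.rid_tmul, one_smul] using this
  calc ∑ i ∈ r.index, g (r.left i) * Coalgebra.counit (R := k) (r.right i)
      = g (∑ i ∈ r.index, Coalgebra.counit (R := k) (r.right i) • r.left i) := by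
        rw [map_sum]; exact Finset.sum_congr rfl fun i _ => by rw [map_smul, smul_eq_mul, mul_comm]
    _ = g a := by rw [h]

end collapse

section comul
variable {A B : Type} [AddCommGroup A] [Module k A] [Coalgebra k A]
  [AddCommGroup B] [Module k B] [Coalgebra k B]

lemma comul_tmul_repr {a : A} {b : B} {ι κ : Type*} (ra : Coalgebra.Repr k a ι) (rb : Coalgebra.Repr k b κ) :
    Coalgebra.comul (R := k) (a ⊗ₜ[k] b) =
      ∑ i ∈ ra.index, ∑ j ∈ rb.index,
        (ra.left i ⊗ₜ[k] rb.left j) ⊗ₜ[k] (ra.right i ⊗ₜ[k] rb.right j) := by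
  have : Coalgebra.comul (R := k) (a ⊗ₜ[k] b)
      = TensorProduct.tensorTensorTensorComm k A A B B
          (Coalgebra.comul (R := k) a ⊗ₜ[k] Coalgebra.comul (R := k) b) := rfl
  rw [this, ← ra.eq, ← rb.eq]
  simp [TensorProduct.sum_tmul, TensorProduct.tmul_sum, map_sum]
  rw [Finset.sum_comm]

lemma counit_tmul (a : A) (b : B) :
    Coalgebra.counit (R := k) (a ⊗ₜ[k] b)
      = Coalgebra.counit (R := k) a * Coalgebra.counit (R := k) b := by
  rw [TensorProduct.counit_tmul, smul_eq_mul, mul_comm]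

end comul

section pairing
variable {k A B : Type} [Field k] [Ring A] [HopfAlgebra k A] [Ring B] [HopfAlgebra k B]
  {σ₀ : A ⊗[k] B →ₗ[k] k}

/-- axiom 2 pointwise: σ₀((c·e')⊗b) = Σⱼ σ₀(c⊗b₁ⱼ)·σ₀(e'⊗b₂ⱼ) -/
lemma pair_mul_left (hσ₀ : IsSkewPairing σ₀) (c e' : A) {b : B} {ι : Type*} (rb : Coalgebra.Repr k b ι) :
    σ₀ ((c * e') ⊗ₜ[k] b) =
      ∑ j ∈ rb.index, σ₀ (c ⊗ₜ[k] rb.left j) * σ₀ (e' ⊗ₜ[k] rb.right j) := by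
  have h := congrArg (fun F : (A ⊗[k] A) ⊗[k] B →ₗ[k] k =>
    F ((c ⊗ₜ[k] e') ⊗ₜ[k] b)) hσ₀.2.1
  simp only [LinearMap.comp_apply, TensorProduct.map_tmul, LinearMap.id_coe, id_eq] at h
  rw [← rb.eq] at h
  simpa [TensorProduct.tmul_sum, map_sum, smul_eq_mul] using h

set_option synthInstance.maxHeartbeats 400000 in
/-- axiom 3 pointwise: σ₀(e⊗(b'·d')) = Σₘ σ₀(e₁ₘ⊗d')·σ₀(e₂ₘ⊗b') -/
lemma pair_mul_right (hσ₀ : IsSkewPairing σ₀) {e : A} {ι : Type*} (re : Coalgebra.Repr k e ι) (b' d' : B) :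
    σ₀ (e ⊗ₜ[k] (b' * d')) =
      ∑ m ∈ re.index, σ₀ (re.left m ⊗ₜ[k] d') * σ₀ (re.right m ⊗ₜ[k] b') := by
  have h := congrArg (fun F : A ⊗[k] (B ⊗[k] B) →ₗ[k] k =>
    F (e ⊗ₜ[k] (b' ⊗ₜ[k] d'))) hσ₀.2.2.1
  simp only [LinearMap.comp_apply, TensorProduct.map_tmul, LinearMap.id_coe, id_eq,
    LinearEquiv.coe_coe, TensorProduct.comm_tmul] at h
  rw [← re.eq] at h
  simpa [TensorProduct.sum_tmul, map_sum, smul_eq_mul] using h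

end pairing

section reprs
variable {A B : Type} [AddCommGroup A] [Module k A] [Coalgebra k A]
  [AddCommGroup B] [Module k B] [Coalgebra k B]

/-- Product representation for `comul (a ⊗ₜ b)`. -/
def reprTmul {a : A} {b : B} {ι κ : Type*} (ra : Coalgebra.Repr k a ι) (rb : Coalgebra.Repr k b κ) :
    Coalgebra.Repr k (a ⊗ₜ[k] b) (ι × κ) where
  index := ra.index ×ˢ rb.index
  left x := ra.left x.1 ⊗ₜ[k] rb.left x.2
  right x := ra.right x.1 ⊗ₜ[k] rb.right x.2
  eq := by rw [Finset.sum_product, ← comul_tmul_repr ra rb]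

lemma conv_apply_repr {C : Type} [AddCommGroup C] [Module k C] [Coalgebra k C]
    (f g : C →ₗ[k] k) {x : C} {ι : Type*} (r : Coalgebra.Repr k x ι) :
    conv f g x = ∑ i ∈ r.index, f (r.left i) * g (r.right i) := by
  have : Coalgebra.comul (R := k) x = ∑ i ∈ r.index, r.left i ⊗ₜ[k] r.right i := r.eq.symm
  simp [conv, this, map_sum, smul_eq_mul]

end reprs

section main
variable {k A B : Type} [Field k]
    [Ring A] [HopfAlgebra k A] [Ring B] [HopfAlgebra k B]
    (σ₀ : A ⊗[k] B →ₗ[k] k)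

/-- the 2-cochain γ -/
abbrev gam : (A ⊗[k] B) ⊗[k] (A ⊗[k] B) →ₗ[k] k :=
  σ₀ ∘ₗ TensorProduct.map
      ((TensorProduct.lid k A).toLinearMap ∘ₗ
        TensorProduct.map Coalgebra.counit (LinearMap.id : A →ₗ[k] A))
      ((TensorProduct.rid k B).toLinearMap ∘ₗ
        TensorProduct.map (LinearMap.id : B →ₗ[k] B) Coalgebra.counit)
    ∘ₗ (TensorProduct.tensorTensorTensorComm k A B A B).toLinearMap

lemma gam_apply (a c : A) (b d : B) :
    gam σ₀ ((a ⊗ₜ[k] b) ⊗ₜ[k] (c ⊗ₜ[k] d)) =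
      Coalgebra.counit (R := k) a * Coalgebra.counit (R := k) d * σ₀ (c ⊗ₜ[k] b) := by
  simp [← TensorProduct.smul_tmul', map_smul, smul_eq_mul]
  ring

end main

section main2
variable {k A B : Type} [Field k]
    [Ring A] [HopfAlgebra k A] [Ring B] [HopfAlgebra k B]
    (σ₀ τ₀ : A ⊗[k] B →ₗ[k] k)

lemma conv_gam (h : conv σ₀ τ₀ = Coalgebra.counit) :
    conv (gam σ₀) (gam τ₀) = Coalgebra.counit := by
  ext a b c d
  show conv (gam σ₀) (gam τ₀) ((a ⊗ₜ[k] b) ⊗ₜ[k] (c ⊗ₜ[k] d))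
      = Coalgebra.counit (R := k) ((a ⊗ₜ[k] b) ⊗ₜ[k] (c ⊗ₜ[k] d))
  set ra := ℛ k a; set rb := ℛ k b; set rc := ℛ k c; set rd := ℛ k d
  rw [conv_apply_repr _ _ (reprTmul (reprTmul ra rb) (reprTmul rc rd))]
  simp only [reprTmul, Finset.sum_product, gam_apply, _root_.counit_tmul]
  have ha : Coalgebra.counit (R := k) a
      = ∑ i ∈ ra.index, Coalgebra.counit (R := k) (ra.left i) * Coalgebra.counit (R := k) (ra.right i) :=
    (collapse_left ra Coalgebra.counit).symm
  have hd : Coalgebra.counit (R := k) d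
      = ∑ q ∈ rd.index, Coalgebra.counit (R := k) (rd.left q) * Coalgebra.counit (R := k) (rd.right q) :=
    (collapse_left rd Coalgebra.counit).symm
  have hcb : (Coalgebra.counit (R := k) c * Coalgebra.counit (R := k) b : k)
      = ∑ p ∈ rc.index, ∑ j ∈ rb.index,
          σ₀ (rc.left p ⊗ₜ[k] rb.left j) * τ₀ (rc.right p ⊗ₜ[k] rb.right j) := by
    have h2 := congrArg (fun F : A ⊗[k] B →ₗ[k] k => F (c ⊗ₜ[k] b)) h
    rw [conv_apply_repr σ₀ τ₀ (reprTmul rc rb)] at h2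
    simp only [reprTmul, Finset.sum_product, _root_.counit_tmul] at h2
    exact h2.symm
  rw [show (Coalgebra.counit (R := k) a * Coalgebra.counit (R := k) b *
      (Coalgebra.counit (R := k) c * Coalgebra.counit (R := k) d) : k)
      = Coalgebra.counit (R := k) a * ((Coalgebra.counit (R := k) c * Coalgebra.counit (R := k) b) *
        Coalgebra.counit (R := k) d) from by ring, ha, hcb, hd]
  simp only [Finset.sum_mul, Finset.mul_sum]
  conv_lhs => rw [Finset.sum_comm]
  conv_lhs => enter [2, j]; rw [Finset.sum_comm]
  conv_lhs => enter [2, j, 2, p]; rw [Finset.sum_comm]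
  conv_lhs => rw [Finset.sum_comm]
  conv_lhs => enter [2, p]; rw [Finset.sum_comm]
  conv_lhs => rw [Finset.sum_comm]
  exact Finset.sum_congr rfl fun q _ => Finset.sum_congr rfl fun p _ =>
    Finset.sum_congr rfl fun j _ => Finset.sum_congr rfl fun i _ => by ring

lemma sigmaEps_gam_apply (a c e : A) (b d f : B) :
    sigmaEps (gam σ₀) ((a ⊗ₜ[k] b) ⊗ₜ[k] ((c ⊗ₜ[k] d) ⊗ₜ[k] (e ⊗ₜ[k] f))) =
      Coalgebra.counit (R := k) a * Coalgebra.counit (R := k) d * σ₀ (c ⊗ₜ[k] b) *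
        (Coalgebra.counit (R := k) e * Coalgebra.counit (R := k) f) := by
  simp [sigmaEps, gam_apply, _root_.counit_tmul]
  exact Or.inl (mul_comm _ _)

lemma sigmaMul_gam_apply (a c e : A) (b d f : B) :
    sigmaMul (gam σ₀) ((a ⊗ₜ[k] b) ⊗ₜ[k] ((c ⊗ₜ[k] d) ⊗ₜ[k] (e ⊗ₜ[k] f))) =
      Coalgebra.counit (R := k) a * Coalgebra.counit (R := k) c *
        Coalgebra.counit (R := k) f * σ₀ (e ⊗ₜ[k] (b * d)) := by
  simp [sigmaMul, Algebra.TensorProduct.tmul_mul_tmul, gam_apply, _root_.counit_tmul,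
    ← TensorProduct.smul_tmul', map_smul, smul_eq_mul]
  ring

lemma epsSigma_gam_apply (a c e : A) (b d f : B) :
    epsSigma (gam σ₀) ((a ⊗ₜ[k] b) ⊗ₜ[k] ((c ⊗ₜ[k] d) ⊗ₜ[k] (e ⊗ₜ[k] f))) =
      Coalgebra.counit (R := k) a * Coalgebra.counit (R := k) b *
        (Coalgebra.counit (R := k) c * Coalgebra.counit (R := k) f * σ₀ (e ⊗ₜ[k] d)) := by
  simp [epsSigma, gam_apply, _root_.counit_tmul, smul_eq_mul]
  exact Or.inl (mul_comm _ _)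

lemma mulSigma_gam_apply (a c e : A) (b d f : B) :
    mulSigma (gam σ₀) ((a ⊗ₜ[k] b) ⊗ₜ[k] ((c ⊗ₜ[k] d) ⊗ₜ[k] (e ⊗ₜ[k] f))) =
      Coalgebra.counit (R := k) a * Coalgebra.counit (R := k) d *
        Coalgebra.counit (R := k) f * σ₀ ((c * e) ⊗ₜ[k] b) := by
  simp [mulSigma, Algebra.TensorProduct.tmul_mul_tmul, gam_apply, _root_.counit_tmul,
    ← TensorProduct.smul_tmul', map_smul, smul_eq_mul]
  ring

set_option maxHeartbeats 1000000 in
lemma cocycle_gam (hσ₀ : IsSkewPairing σ₀) :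
    conv (sigmaEps (gam σ₀)) (sigmaMul (gam σ₀))
      = conv (epsSigma (gam σ₀)) (mulSigma (gam σ₀)) := by
  ext a b c d e f
  show conv (sigmaEps (gam σ₀)) (sigmaMul (gam σ₀))
        ((a ⊗ₜ[k] b) ⊗ₜ[k] ((c ⊗ₜ[k] d) ⊗ₜ[k] (e ⊗ₜ[k] f)))
      = conv (epsSigma (gam σ₀)) (mulSigma (gam σ₀))
        ((a ⊗ₜ[k] b) ⊗ₜ[k] ((c ⊗ₜ[k] d) ⊗ₜ[k] (e ⊗ₜ[k] f)))
  set ra := ℛ k a; set rb := ℛ k b; set rc := ℛ k c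
  set rd := ℛ k d; set re := ℛ k e; set rf := ℛ k f
  rw [conv_apply_repr _ _ (reprTmul (reprTmul ra rb) (reprTmul (reprTmul rc rd) (reprTmul re rf))),
    conv_apply_repr _ _ (reprTmul (reprTmul ra rb) (reprTmul (reprTmul rc rd) (reprTmul re rf)))]
  simp only [reprTmul, Finset.sum_product, sigmaEps_gam_apply, sigmaMul_gam_apply,
    epsSigma_gam_apply, mulSigma_gam_apply]
  have ha : ∑ i ∈ ra.index, Coalgebra.counit (R := k) (ra.left i) * Coalgebra.counit (R := k) (ra.right i)
      = Coalgebra.counit (R := k) a := collapse_left ra Coalgebra.counit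
  have hf : ∑ n ∈ rf.index, Coalgebra.counit (R := k) (rf.left n) * Coalgebra.counit (R := k) (rf.right n)
      = Coalgebra.counit (R := k) f := collapse_left rf Coalgebra.counit
  have he : ∀ b' : B, ∑ m ∈ re.index,
      Coalgebra.counit (R := k) (re.left m) * σ₀ (re.right m ⊗ₜ[k] b') = σ₀ (e ⊗ₜ[k] b') :=
    fun b' => by simpa using collapse_left re (σ₀ ∘ₗ (TensorProduct.mk k A B).flip b')
  have hd2 : ∀ b' : B, ∑ q ∈ rd.index,
      Coalgebra.counit (R := k) (rd.left q) * σ₀ (e ⊗ₜ[k] (b' * rd.right q)) = σ₀ (e ⊗ₜ[k] (b' * d)) :=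
    fun b' => by simpa using collapse_left rd (σ₀ ∘ₗ TensorProduct.mk k A B e ∘ₗ LinearMap.mulLeft k b')
  have hc : ∀ b' : B, ∑ p ∈ rc.index,
      σ₀ (rc.left p ⊗ₜ[k] b') * Coalgebra.counit (R := k) (rc.right p) = σ₀ (c ⊗ₜ[k] b') :=
    fun b' => by simpa using collapse_right rc (σ₀ ∘ₗ (TensorProduct.mk k A B).flip b')
  have hd3 : ∀ x : A, ∑ q ∈ rd.index,
      σ₀ (x ⊗ₜ[k] rd.left q) * Coalgebra.counit (R := k) (rd.right q) = σ₀ (x ⊗ₜ[k] d) :=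
    fun x => by simpa using collapse_right rd (σ₀ ∘ₗ TensorProduct.mk k A B x)
  have hc2 : ∀ (x : A) (b' : B), ∑ p ∈ rc.index,
      Coalgebra.counit (R := k) (rc.left p) * σ₀ ((rc.right p * x) ⊗ₜ[k] b') = σ₀ ((c * x) ⊗ₜ[k] b') :=
    fun x b' => by
      simpa using collapse_left rc (σ₀ ∘ₗ (TensorProduct.mk k A B).flip b' ∘ₗ LinearMap.mulRight k x)
  have hb : ∀ x : A, ∑ j ∈ rb.index,
      Coalgebra.counit (R := k) (rb.left j) * σ₀ (x ⊗ₜ[k] rb.right j) = σ₀ (x ⊗ₜ[k] b) :=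
    fun x => by simpa using collapse_left rb (σ₀ ∘ₗ TensorProduct.mk k A B x)
  have hL : (∑ i ∈ ra.index, ∑ j ∈ rb.index, ∑ p ∈ rc.index, ∑ q ∈ rd.index, ∑ m ∈ re.index, ∑ n ∈ rf.index,
      Coalgebra.counit (R := k) (ra.left i) * Coalgebra.counit (R := k) (rd.left q) * σ₀ (rc.left p ⊗ₜ[k] rb.left j) *
          (Coalgebra.counit (R := k) (re.left m) * Coalgebra.counit (R := k) (rf.left n)) *
        (Coalgebra.counit (R := k) (ra.right i) * Coalgebra.counit (R := k) (rc.right p) * Coalgebra.counit (R := k) (rf.right n) *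
          σ₀ (re.right m ⊗ₜ[k] (rb.right j * rd.right q))))
      = ∑ j ∈ rb.index, ∑ m ∈ re.index,
          Coalgebra.counit (R := k) a * Coalgebra.counit (R := k) f * σ₀ (c ⊗ₜ[k] rb.left j) *
            (σ₀ (re.left m ⊗ₜ[k] d) * σ₀ (re.right m ⊗ₜ[k] rb.right j)) := by
    calc (∑ i ∈ ra.index, ∑ j ∈ rb.index, ∑ p ∈ rc.index, ∑ q ∈ rd.index, ∑ m ∈ re.index, ∑ n ∈ rf.index,
        Coalgebra.counit (R := k) (ra.left i) * Coalgebra.counit (R := k) (rd.left q) * σ₀ (rc.left p ⊗ₜ[k] rb.left j) *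
            (Coalgebra.counit (R := k) (re.left m) * Coalgebra.counit (R := k) (rf.left n)) *
          (Coalgebra.counit (R := k) (ra.right i) * Coalgebra.counit (R := k) (rc.right p) * Coalgebra.counit (R := k) (rf.right n) *
            σ₀ (re.right m ⊗ₜ[k] (rb.right j * rd.right q))))
        = ∑ i ∈ ra.index, ∑ j ∈ rb.index, ∑ p ∈ rc.index, ∑ q ∈ rd.index, ∑ m ∈ re.index,
            (Coalgebra.counit (R := k) (ra.left i) * Coalgebra.counit (R := k) (ra.right i) *
              Coalgebra.counit (R := k) (rc.right p) * Coalgebra.counit (R := k) (rd.left q) *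
              σ₀ (rc.left p ⊗ₜ[k] rb.left j) *
              (Coalgebra.counit (R := k) (re.left m) * σ₀ (re.right m ⊗ₜ[k] (rb.right j * rd.right q)))) *
              Coalgebra.counit (R := k) f := by
          refine Finset.sum_congr rfl fun i _ => Finset.sum_congr rfl fun j _ =>
            Finset.sum_congr rfl fun p _ => Finset.sum_congr rfl fun q _ =>
            Finset.sum_congr rfl fun m _ => ?_
          rw [← hf, Finset.mul_sum]
          exact Finset.sum_congr rfl fun n _ => by ring
      _ = ∑ i ∈ ra.index, ∑ j ∈ rb.index, ∑ p ∈ rc.index, ∑ q ∈ rd.index,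
            (Coalgebra.counit (R := k) (ra.left i) * Coalgebra.counit (R := k) (ra.right i) *
              Coalgebra.counit (R := k) (rc.right p) * Coalgebra.counit (R := k) (rd.left q) *
              σ₀ (rc.left p ⊗ₜ[k] rb.left j) * Coalgebra.counit (R := k) f) *
              σ₀ (e ⊗ₜ[k] (rb.right j * rd.right q)) := by
          refine Finset.sum_congr rfl fun i _ => Finset.sum_congr rfl fun j _ =>
            Finset.sum_congr rfl fun p _ => Finset.sum_congr rfl fun q _ => ?_
          rw [← he (rb.right j * rd.right q), Finset.mul_sum]
          exact Finset.sum_congr rfl fun m _ => by ring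
      _ = ∑ i ∈ ra.index, ∑ j ∈ rb.index, ∑ p ∈ rc.index,
            (Coalgebra.counit (R := k) (ra.left i) * Coalgebra.counit (R := k) (ra.right i) *
              Coalgebra.counit (R := k) (rc.right p) *
              σ₀ (rc.left p ⊗ₜ[k] rb.left j) * Coalgebra.counit (R := k) f) *
              σ₀ (e ⊗ₜ[k] (rb.right j * d)) := by
          refine Finset.sum_congr rfl fun i _ => Finset.sum_congr rfl fun j _ =>
            Finset.sum_congr rfl fun p _ => ?_
          rw [← hd2 (rb.right j), Finset.mul_sum]
          exact Finset.sum_congr rfl fun q _ => by ring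
      _ = ∑ i ∈ ra.index, ∑ j ∈ rb.index,
            (Coalgebra.counit (R := k) (ra.left i) * Coalgebra.counit (R := k) (ra.right i) *
              Coalgebra.counit (R := k) f * σ₀ (e ⊗ₜ[k] (rb.right j * d))) *
              σ₀ (c ⊗ₜ[k] rb.left j) := by
          refine Finset.sum_congr rfl fun i _ => Finset.sum_congr rfl fun j _ => ?_
          rw [← hc (rb.left j), Finset.mul_sum]
          exact Finset.sum_congr rfl fun p _ => by ring
      _ = ∑ j ∈ rb.index,
            (Coalgebra.counit (R := k) f * σ₀ (e ⊗ₜ[k] (rb.right j * d)) * σ₀ (c ⊗ₜ[k] rb.left j)) *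
              Coalgebra.counit (R := k) a := by
          rw [Finset.sum_comm]
          refine Finset.sum_congr rfl fun j _ => ?_
          rw [← ha, Finset.mul_sum]
          exact Finset.sum_congr rfl fun i _ => by ring
      _ = ∑ j ∈ rb.index, ∑ m ∈ re.index,
            Coalgebra.counit (R := k) a * Coalgebra.counit (R := k) f * σ₀ (c ⊗ₜ[k] rb.left j) *
              (σ₀ (re.left m ⊗ₜ[k] d) * σ₀ (re.right m ⊗ₜ[k] rb.right j)) := by
          refine Finset.sum_congr rfl fun j _ => ?_
          rw [pair_mul_right hσ₀ re (rb.right j) d, Finset.mul_sum, Finset.sum_mul, Finset.sum_mul]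
          exact Finset.sum_congr rfl fun m _ => by ring
  rw [hL]
  have hR : (∑ i ∈ ra.index, ∑ j ∈ rb.index, ∑ p ∈ rc.index, ∑ q ∈ rd.index, ∑ m ∈ re.index, ∑ n ∈ rf.index,
      Coalgebra.counit (R := k) (ra.left i) * Coalgebra.counit (R := k) (rb.left j) *
          (Coalgebra.counit (R := k) (rc.left p) * Coalgebra.counit (R := k) (rf.left n) *
            σ₀ (re.left m ⊗ₜ[k] rd.left q)) *
        (Coalgebra.counit (R := k) (ra.right i) * Coalgebra.counit (R := k) (rd.right q) *
          Coalgebra.counit (R := k) (rf.right n) *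
          σ₀ ((rc.right p * re.right m) ⊗ₜ[k] rb.right j)))
      = ∑ j ∈ rb.index, ∑ m ∈ re.index,
          Coalgebra.counit (R := k) a * Coalgebra.counit (R := k) f * σ₀ (c ⊗ₜ[k] rb.left j) *
            (σ₀ (re.left m ⊗ₜ[k] d) * σ₀ (re.right m ⊗ₜ[k] rb.right j)) := by
    calc (∑ i ∈ ra.index, ∑ j ∈ rb.index, ∑ p ∈ rc.index, ∑ q ∈ rd.index, ∑ m ∈ re.index, ∑ n ∈ rf.index,
        Coalgebra.counit (R := k) (ra.left i) * Coalgebra.counit (R := k) (rb.left j) *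
            (Coalgebra.counit (R := k) (rc.left p) * Coalgebra.counit (R := k) (rf.left n) *
              σ₀ (re.left m ⊗ₜ[k] rd.left q)) *
          (Coalgebra.counit (R := k) (ra.right i) * Coalgebra.counit (R := k) (rd.right q) *
            Coalgebra.counit (R := k) (rf.right n) *
            σ₀ ((rc.right p * re.right m) ⊗ₜ[k] rb.right j)))
        = ∑ i ∈ ra.index, ∑ j ∈ rb.index, ∑ p ∈ rc.index, ∑ q ∈ rd.index, ∑ m ∈ re.index,
            (Coalgebra.counit (R := k) (ra.left i) * Coalgebra.counit (R := k) (ra.right i) *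
              Coalgebra.counit (R := k) (rb.left j) * Coalgebra.counit (R := k) (rc.left p) *
              Coalgebra.counit (R := k) (rd.right q) * σ₀ (re.left m ⊗ₜ[k] rd.left q) *
              σ₀ ((rc.right p * re.right m) ⊗ₜ[k] rb.right j)) * Coalgebra.counit (R := k) f := by
          refine Finset.sum_congr rfl fun i _ => Finset.sum_congr rfl fun j _ =>
            Finset.sum_congr rfl fun p _ => Finset.sum_congr rfl fun q _ =>
            Finset.sum_congr rfl fun m _ => ?_
          rw [← hf, Finset.mul_sum]
          exact Finset.sum_congr rfl fun n _ => by ring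
      _ = ∑ i ∈ ra.index, ∑ j ∈ rb.index, ∑ p ∈ rc.index, ∑ m ∈ re.index, ∑ q ∈ rd.index,
            (Coalgebra.counit (R := k) (ra.left i) * Coalgebra.counit (R := k) (ra.right i) *
              Coalgebra.counit (R := k) (rb.left j) * Coalgebra.counit (R := k) (rc.left p) *
              Coalgebra.counit (R := k) (rd.right q) * σ₀ (re.left m ⊗ₜ[k] rd.left q) *
              σ₀ ((rc.right p * re.right m) ⊗ₜ[k] rb.right j)) * Coalgebra.counit (R := k) f := by
          exact Finset.sum_congr rfl fun i _ => Finset.sum_congr rfl fun j _ =>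
            Finset.sum_congr rfl fun p _ => Finset.sum_comm
      _ = ∑ i ∈ ra.index, ∑ j ∈ rb.index, ∑ p ∈ rc.index, ∑ m ∈ re.index,
            (Coalgebra.counit (R := k) (ra.left i) * Coalgebra.counit (R := k) (ra.right i) *
              Coalgebra.counit (R := k) (rb.left j) * Coalgebra.counit (R := k) (rc.left p) *
              Coalgebra.counit (R := k) f *
              σ₀ ((rc.right p * re.right m) ⊗ₜ[k] rb.right j)) * σ₀ (re.left m ⊗ₜ[k] d) := by
          refine Finset.sum_congr rfl fun i _ => Finset.sum_congr rfl fun j _ =>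
            Finset.sum_congr rfl fun p _ => Finset.sum_congr rfl fun m _ => ?_
          rw [← hd3 (re.left m), Finset.mul_sum]
          exact Finset.sum_congr rfl fun q _ => by ring
      _ = ∑ i ∈ ra.index, ∑ j ∈ rb.index, ∑ m ∈ re.index, ∑ p ∈ rc.index,
            (Coalgebra.counit (R := k) (ra.left i) * Coalgebra.counit (R := k) (ra.right i) *
              Coalgebra.counit (R := k) (rb.left j) * Coalgebra.counit (R := k) (rc.left p) *
              Coalgebra.counit (R := k) f *
              σ₀ ((rc.right p * re.right m) ⊗ₜ[k] rb.right j)) * σ₀ (re.left m ⊗ₜ[k] d) := by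
          exact Finset.sum_congr rfl fun i _ => Finset.sum_congr rfl fun j _ => Finset.sum_comm
      _ = ∑ i ∈ ra.index, ∑ j ∈ rb.index, ∑ m ∈ re.index,
            (Coalgebra.counit (R := k) (ra.left i) * Coalgebra.counit (R := k) (ra.right i) *
              Coalgebra.counit (R := k) (rb.left j) * Coalgebra.counit (R := k) f *
              σ₀ (re.left m ⊗ₜ[k] d)) * σ₀ ((c * re.right m) ⊗ₜ[k] rb.right j) := by
          refine Finset.sum_congr rfl fun i _ => Finset.sum_congr rfl fun j _ =>
            Finset.sum_congr rfl fun m _ => ?_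
          rw [← hc2 (re.right m) (rb.right j), Finset.mul_sum]
          exact Finset.sum_congr rfl fun p _ => by ring
      _ = ∑ i ∈ ra.index, ∑ m ∈ re.index, ∑ j ∈ rb.index,
            (Coalgebra.counit (R := k) (ra.left i) * Coalgebra.counit (R := k) (ra.right i) *
              Coalgebra.counit (R := k) (rb.left j) * Coalgebra.counit (R := k) f *
              σ₀ (re.left m ⊗ₜ[k] d)) * σ₀ ((c * re.right m) ⊗ₜ[k] rb.right j) := by
          exact Finset.sum_congr rfl fun i _ => Finset.sum_comm
      _ = ∑ i ∈ ra.index, ∑ m ∈ re.index,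
            (Coalgebra.counit (R := k) (ra.left i) * Coalgebra.counit (R := k) (ra.right i) *
              Coalgebra.counit (R := k) f * σ₀ (re.left m ⊗ₜ[k] d)) *
              σ₀ ((c * re.right m) ⊗ₜ[k] b) := by
          refine Finset.sum_congr rfl fun i _ => Finset.sum_congr rfl fun m _ => ?_
          rw [← hb (c * re.right m), Finset.mul_sum]
          exact Finset.sum_congr rfl fun j _ => by ring
      _ = ∑ m ∈ re.index,
            (Coalgebra.counit (R := k) f * σ₀ (re.left m ⊗ₜ[k] d) *
              σ₀ ((c * re.right m) ⊗ₜ[k] b)) * Coalgebra.counit (R := k) a := by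
          rw [Finset.sum_comm]
          refine Finset.sum_congr rfl fun m _ => ?_
          rw [← ha, Finset.mul_sum]
          exact Finset.sum_congr rfl fun i _ => by ring
      _ = ∑ m ∈ re.index, ∑ j ∈ rb.index,
            Coalgebra.counit (R := k) a * Coalgebra.counit (R := k) f * σ₀ (c ⊗ₜ[k] rb.left j) *
              (σ₀ (re.left m ⊗ₜ[k] d) * σ₀ (re.right m ⊗ₜ[k] rb.right j)) := by
          refine Finset.sum_congr rfl fun m _ => ?_
          rw [pair_mul_left hσ₀ c (re.right m) rb, Finset.mul_sum, Finset.sum_mul]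
          exact Finset.sum_congr rfl fun j _ => by ring
      _ = ∑ j ∈ rb.index, ∑ m ∈ re.index,
            Coalgebra.counit (R := k) a * Coalgebra.counit (R := k) f * σ₀ (c ⊗ₜ[k] rb.left j) *
              (σ₀ (re.left m ⊗ₜ[k] d) * σ₀ (re.right m ⊗ₜ[k] rb.right j)) := Finset.sum_comm
  exact hR.symm

lemma gam_one (hσ₀ : IsSkewPairing σ₀) :
    gam σ₀ ((1 : A ⊗[k] B) ⊗ₜ[k] (1 : A ⊗[k] B)) = 1 := by
  rw [Algebra.TensorProduct.one_def, gam_apply, hσ₀.2.2.2.1]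
  simp

end main2


/-- If σ₀ is a skew pairing of Hopf algebras A and B, then
γ₀(a ⊗ b, c ⊗ d) = ε(a)·σ₀(c, b)·ε(d) is a Hopf 2-cocycle on the tensor product
Hopf algebra A ⊗ B. -/
theorem skewPairing_gives_cocycle {k A B : Type} [Field k]
    [Ring A] [HopfAlgebra k A] [Ring B] [HopfAlgebra k B]
    (σ₀ : A ⊗[k] B →ₗ[k] k) (hσ₀ : IsSkewPairing σ₀) :
    IsHopfTwoCocycle
      (σ₀ ∘ₗ TensorProduct.map
          ((TensorProduct.lid k A).toLinearMap ∘ₗ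
            TensorProduct.map Coalgebra.counit (LinearMap.id : A →ₗ[k] A))
          ((TensorProduct.rid k B).toLinearMap ∘ₗ
            TensorProduct.map (LinearMap.id : B →ₗ[k] B) Coalgebra.counit)
        ∘ₗ (TensorProduct.tensorTensorTensorComm k A B A B).toLinearMap :
        (A ⊗[k] B) ⊗[k] (A ⊗[k] B) →ₗ[k] k) := by
  obtain ⟨τ₀, hστ, hτσ⟩ := hσ₀.1
  exact ⟨⟨gam τ₀, conv_gam σ₀ τ₀ hστ, conv_gam τ₀ σ₀ hτσ⟩, gam_one σ₀ hσ₀, cocycle_gam σ₀ hσ₀⟩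

end
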